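/- For any budget B ≥ 1 and any population instance, the welfare of an optimal (possibly overlapping) testing regime is at most 4 times the welfare of an optimal non-overlapping testing regime; that is, gain(B) ≤ 4. -/

import Mathlib

open Finset

/-- Probability of a health realization `ω` (true = healthy) under independent
healthy-probabilities `q`. -/
noncomputable def healthProb {n : ℕ} (q : Fin n → ℝ) (ω : Fin n → Bool) : ℝ :=
  ∏ i, if ω i then q i else 1 - q i

/-- Probability that individual `i` lies in at least one negative test of the regime `T`. -/
noncomputable def inNegProb {n B : ℕ} (q : Fin n → ℝ) (T : Fin B → Finset (Fin n))
    (i : Fin n) : ℝ :=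
  ∑ ω : Fin n → Bool,
    if ∃ j, i ∈ T j ∧ ∀ k ∈ T j, ω k = true then healthProb q ω else 0

/-- Expected welfare of a (possibly overlapping) testing regime `T`. -/
noncomputable def welfare {n B : ℕ} (q u : Fin n → ℝ) (T : Fin B → Finset (Fin n)) : ℝ :=
  ∑ i, u i * inNegProb q T i

/-- Stand-alone expected welfare of a single pooled test `t`. -/
noncomputable def testWelfare {n : ℕ} (q u : Fin n → ℝ) (t : Finset (Fin n)) : ℝ :=
  (∏ i ∈ t, q i) * ∑ i ∈ t, u i

/-- Welfare of a non-overlapping testing regime, as a sum of stand-alone test welfares. -/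
noncomputable def noWelfare {n B : ℕ} (q u : Fin n → ℝ) (T : Fin B → Finset (Fin n)) : ℝ :=
  ∑ j, testWelfare q u (T j)

/-- Probability that test `T j` is pivotal for individual `i`: `i ∈ T j`, test `T j` is
negative, and every earlier test containing `i` is positive. -/
noncomputable def pivotalProb {n B : ℕ} (q : Fin n → ℝ) (T : Fin B → Finset (Fin n))
    (i : Fin n) (j : Fin B) : ℝ :=
  ∑ ω : Fin n → Bool,
    if i ∈ T j ∧ (∀ k ∈ T j, ω k = true) ∧
        (∀ j' : Fin B, j' < j → i ∈ T j' → ∃ k ∈ T j', ω k = false)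
      then healthProb q ω else 0


section AuxLemmas
variable {n B : ℕ} {q : Fin n → ℝ} {T : Fin B → Finset (Fin n)}

lemma sum_fn_prod {ι κ : Type*} [Fintype ι] [DecidableEq ι] [Fintype κ] (F : ι → κ → ℝ) :
    ∑ σ : ι → κ, ∏ i, F i (σ i) = ∏ i, ∑ x, F i x := by
  rw [Finset.prod_univ_sum, Fintype.piFinset_univ]

lemma healthProb_nonneg (hq : ∀ i, 0 ≤ q i ∧ q i ≤ 1) (ω : Fin n → Bool) :
    0 ≤ healthProb q ω := by
  refine Finset.prod_nonneg fun i _ => ?_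
  rcases hq i with ⟨h0, h1⟩
  by_cases h : ω i <;> simp [h] <;> linarith

lemma sum_healthProb_cond (hq : ∀ i, 0 ≤ q i ∧ q i ≤ 1) (t : Finset (Fin n)) :
    ∑ ω : Fin n → Bool, (if (∀ k ∈ t, ω k = true) then healthProb q ω else 0)
      = ∏ k ∈ t, q k := by
  classical
  have h1 : ∀ ω : Fin n → Bool, (if (∀ k ∈ t, ω k = true) then healthProb q ω else 0)
      = ∏ i, (fun i (b : Bool) => if i ∈ t then (if b = true then q i else 0)
          else (if b = true then q i else 1 - q i)) i (ω i) := by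
    intro ω
    by_cases h : ∀ k ∈ t, ω k = true
    · rw [if_pos h]
      unfold healthProb
      refine Finset.prod_congr rfl fun i _ => ?_
      by_cases hit : i ∈ t
      · simp [hit, h i hit]
      · simp [hit]
    · rw [if_neg h]
      push_neg at h
      obtain ⟨k, hk, hkf⟩ := h
      refine (Finset.prod_eq_zero (Finset.mem_univ k) ?_).symm
      simp only [if_pos hk, if_neg hkf]
  rw [Finset.sum_congr rfl fun ω _ => h1 ω, sum_fn_prod (F := fun i (b : Bool) => if i ∈ t then (if b = true then q i else 0) else (if b = true then q i else 1 - q i))]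
  have h2 : ∀ i : Fin n,
      (∑ b : Bool, (if i ∈ t then (if b = true then q i else 0)
          else (if b = true then q i else 1 - q i)))
        = if i ∈ t then q i else 1 := by
    intro i
    by_cases hit : i ∈ t <;> simp [hit] <;> ring
  rw [Finset.prod_congr rfl fun i _ => h2 i, Finset.prod_ite_mem, Finset.univ_inter]

lemma pivotalProb_nonneg (hq : ∀ i, 0 ≤ q i ∧ q i ≤ 1) (i : Fin n) (j : Fin B) :
    0 ≤ pivotalProb q T i j := by
  refine Finset.sum_nonneg fun ω _ => ?_
  split
  · exact healthProb_nonneg hq ω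
  · exact le_refl 0

lemma pivotalProb_le (hq : ∀ i, 0 ≤ q i ∧ q i ≤ 1) (i : Fin n) (j : Fin B) :
    pivotalProb q T i j ≤ ∏ k ∈ T j, q k := by
  rw [← sum_healthProb_cond hq (T j)]
  refine Finset.sum_le_sum fun ω _ => ?_
  split_ifs with h1 h2
  · exact le_refl _
  · exact absurd h1.2.1 h2
  · exact healthProb_nonneg hq ω
  · exact le_refl _

lemma pivotalProb_eq_zero_of_not_mem (i : Fin n) (j : Fin B) (h : i ∉ T j) :
    pivotalProb q T i j = 0 := by
  refine Finset.sum_eq_zero fun ω _ => ?_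
  rw [if_neg]
  rintro ⟨h1, -, -⟩
  exact h h1

lemma pivotalProb_eq_zero_of_q_zero (i : Fin n) (j : Fin B) (h : q i = 0) :
    pivotalProb q T i j = 0 := by
  refine Finset.sum_eq_zero fun ω _ => ?_
  split_ifs with hc
  · refine Finset.prod_eq_zero (Finset.mem_univ i) ?_
    rw [hc.2.1 i hc.1, if_pos rfl, h]
  · rfl

lemma sum_pivotalProb (i : Fin n) :
    ∑ j, pivotalProb q T i j = inNegProb q T i := by
  classical
  unfold pivotalProb inNegProb
  rw [Finset.sum_comm]
  refine Finset.sum_congr rfl fun ω _ => ?_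
  by_cases hcov : ∃ j, i ∈ T j ∧ ∀ k ∈ T j, ω k = true
  · rw [if_pos hcov]
    set S := Finset.univ.filter (fun j => i ∈ T j ∧ ∀ k ∈ T j, ω k = true) with hS
    have hSne : S.Nonempty := by
      obtain ⟨j, hj⟩ := hcov
      exact ⟨j, by simp only [hS, Finset.mem_filter]; exact ⟨Finset.mem_univ _, hj⟩⟩
    set j₀ := S.min' hSne with hj₀def
    have hj₀S : j₀ ∈ S := S.min'_mem hSne
    rw [hS, Finset.mem_filter] at hj₀S
    have hj₀ := hj₀S.2
    rw [Finset.sum_eq_single j₀]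
    · rw [if_pos]
      exact ⟨hj₀.1, hj₀.2, fun j' hlt hmem => by
        by_contra hcon
        push_neg at hcon
        have : j' ∈ S := by
          rw [hS, Finset.mem_filter]
          refine ⟨Finset.mem_univ _, hmem, fun k hk => ?_⟩
          have := hcon k hk
          simpa using this
        exact absurd (S.min'_le j' this) (not_le.mpr hlt)⟩
    · intro j _ hne
      rw [if_neg]
      rintro ⟨hmem, hneg, hfirst⟩
      have hjS : j ∈ S := by rw [hS, Finset.mem_filter]; exact ⟨Finset.mem_univ _, hmem, hneg⟩
      have : j₀ < j := lt_of_le_of_ne (S.min'_le j hjS) (Ne.symm hne)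
      obtain ⟨k, hk, hkf⟩ := hfirst j₀ this hj₀.1
      rw [hj₀.2 k hk] at hkf
      exact absurd hkf (by simp)
    · intro h
      exact absurd (Finset.mem_univ j₀) h
  · rw [if_neg hcov]
    refine Finset.sum_eq_zero fun j _ => ?_
    rw [if_neg]
    rintro ⟨h1, h2, -⟩
    exact hcov ⟨j, h1, h2⟩

lemma inNegProb_nonneg (hq : ∀ i, 0 ≤ q i ∧ q i ≤ 1) (i : Fin n) :
    0 ≤ inNegProb q T i := by
  refine Finset.sum_nonneg fun ω _ => ?_
  split
  · exact healthProb_nonneg hq ω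
  · exact le_refl 0

lemma inNegProb_le_q (hq : ∀ i, 0 ≤ q i ∧ q i ≤ 1) (i : Fin n) :
    inNegProb q T i ≤ q i := by
  have h := sum_healthProb_cond (q := q) hq {i}
  simp only [Finset.mem_singleton, Finset.prod_singleton] at h
  rw [← h]
  refine Finset.sum_le_sum fun ω _ => ?_
  split_ifs with h1 h2
  · exact le_refl _
  · obtain ⟨j, hj, hneg⟩ := h1
    exact absurd (fun k (hk : k = i) => hk ▸ hneg i hj) h2
  · exact healthProb_nonneg hq ω
  · exact le_refl _

lemma sum_weight_le_one (hq : ∀ i, 0 ≤ q i ∧ q i ≤ 1) (t : Finset (Fin n)) :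
    ∑ i ∈ t, (1 - q i) * ∏ k ∈ t.erase i, q k ≤ 1 := by
  classical
  induction t using Finset.induction_on with
  | empty => simp
  | @insert a s ha ih =>
    rw [Finset.sum_insert ha]
    have h1 : (insert a s).erase a = s := by
      rw [Finset.erase_insert ha]
    have h2 : ∀ i ∈ s, (1 - q i) * ∏ k ∈ (insert a s).erase i, q k
        = q a * ((1 - q i) * ∏ k ∈ s.erase i, q k) := by
      intro i hi
      have hne : a ≠ i := fun h => ha (h ▸ hi)
      rw [Finset.erase_insert_of_ne hne, Finset.prod_insert (fun h => ha (Finset.mem_of_mem_erase h))]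
      ring
    rw [h1, Finset.sum_congr rfl h2, ← Finset.mul_sum]
    have hprod : ∏ k ∈ s, q k ≤ 1 :=
      Finset.prod_le_one (fun i _ => (hq i).1) (fun i _ => (hq i).2)
    have hprod0 : 0 ≤ ∏ k ∈ s, q k := Finset.prod_nonneg fun i _ => (hq i).1
    have hqa := hq a
    nlinarith [mul_le_mul_of_nonneg_left ih (hq a).1]

lemma one_sub_sum_le_prod {ι : Type*} [DecidableEq ι] (s : Finset ι) (f : ι → ℝ)
    (h0 : ∀ i ∈ s, 0 ≤ f i) (h1 : ∀ i ∈ s, f i ≤ 1) :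
    1 - ∑ i ∈ s, f i ≤ ∏ i ∈ s, (1 - f i) := by
  classical
  induction s using Finset.induction_on with
  | empty => simp
  | @insert a s ha ih =>
    rw [Finset.sum_insert ha, Finset.prod_insert ha]
    have ih' := ih (fun i hi => h0 i (Finset.mem_insert_of_mem hi))
      (fun i hi => h1 i (Finset.mem_insert_of_mem hi))
    have ha0 := h0 a (Finset.mem_insert_self a s)
    have ha1 := h1 a (Finset.mem_insert_self a s)
    have hs0 : 0 ≤ ∑ i ∈ s, f i := Finset.sum_nonneg (fun i hi => h0 i (Finset.mem_insert_of_mem hi))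
    nlinarith

end AuxLemmas

/-- For any budget `B ≥ 1`, the gain of overlaps is at most 4: the welfare of any
(possibly overlapping) testing regime is at most four times the welfare of some
non-overlapping testing regime with the same budget and pool bound. -/
theorem stmt6 {n B G : ℕ} (hB : 1 ≤ B) (q u : Fin n → ℝ)
    (hq : ∀ i, 0 ≤ q i ∧ q i ≤ 1) (hu : ∀ i, 0 ≤ u i)
    (T : Fin B → Finset (Fin n)) (hsize : ∀ j, (T j).card ≤ G) :
    ∃ T' : Fin B → Finset (Fin n),
      (∀ j k, j ≠ k → Disjoint (T' j) (T' k)) ∧ (∀ j, (T' j).card ≤ G) ∧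
        welfare q u T ≤ 4 * welfare q u T' := by
  classical
  set p : Fin n → Fin B → ℝ := fun i j => pivotalProb q T i j / (2 * q i) with hp
  have hp0 : ∀ i j, 0 ≤ p i j := fun i j =>
    div_nonneg (pivotalProb_nonneg hq i j) (by linarith [(hq i).1])
  have hqp : ∀ i j, q i * p i j = pivotalProb q T i j / 2 := by
    intro i j
    by_cases h : q i = 0
    · rw [h, zero_mul, pivotalProb_eq_zero_of_q_zero i j h, zero_div]
    · rw [hp]; field_simp
  have hpsum : ∀ i, ∑ j, p i j ≤ 1 / 2 := by
    intro i
    by_cases h : q i = 0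
    · have hz : ∀ j, p i j = 0 := fun j => by
        rw [hp]; simp [pivotalProb_eq_zero_of_q_zero i j h]
      rw [Finset.sum_congr rfl fun j _ => hz j]
      simp
    · have hqi : 0 < q i := lt_of_le_of_ne (hq i).1 (Ne.symm h)
      rw [hp, ← Finset.sum_div, sum_pivotalProb, div_le_iff₀ (by linarith)]
      have := inNegProb_le_q (T := T) hq i
      linarith
  have hplee : ∀ (j : Fin B), ∀ i ∈ T j, p i j ≤ (∏ k ∈ (T j).erase i, q k) / 2 := by
    intro j i hi
    by_cases h : q i = 0
    · simp only [hp, pivotalProb_eq_zero_of_q_zero i j h, zero_div]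
      exact div_nonneg (Finset.prod_nonneg fun k _ => (hq k).1) (by norm_num)
    · have hqi : 0 < q i := lt_of_le_of_ne (hq i).1 (Ne.symm h)
      have h1 : pivotalProb q T i j ≤ q i * ∏ k ∈ (T j).erase i, q k := by
        rw [Finset.mul_prod_erase _ _ hi]
        exact pivotalProb_le hq i j
      simp only [hp]
      rw [div_le_div_iff₀ (by linarith) two_pos]
      nlinarith
  -- the random-assignment weights
  set w : Fin n → Option (Fin B) → ℝ :=
    fun i o => Option.elim o (1 - ∑ j, p i j) (fun j => p i j) with hw
  have hw0 : ∀ i o, 0 ≤ w i o := by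
    intro i o
    cases o with
    | none => simp only [hw, Option.elim]; linarith [hpsum i]
    | some j => exact hp0 i j
  have hwsome : ∀ i j, w i (some j) = p i j := fun i j => rfl
  have hwsum : ∀ i, ∑ o, w i o = 1 := by
    intro i
    rw [Fintype.sum_option]
    simp only [hw, Option.elim]
    ring
  -- the disjoint regime induced by an assignment
  set Reg : (Fin n → Option (Fin B)) → (Fin B → Finset (Fin n)) :=
    fun σ j => (T j).filter (fun i => σ i = some j) with hReg
  set Phi : (Fin n → Option (Fin B)) → ℝ := fun σ => noWelfare q u (Reg σ) with hPhi
  -- coordinate-factor function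
  set F : Fin B → Fin n → Fin n → Option (Fin B) → ℝ :=
    fun j i i' o =>
      if i' = i then (if o = some j then u i * q i else 0)
      else if i' ∈ T j then (if o = some j then q i' else 1) else 1 with hF
  have hPhiForm : ∀ σ, Phi σ = ∑ j, ∑ i ∈ T j, ∏ i', F j i i' (σ i') := by
    intro σ
    simp only [hPhi]
    unfold noWelfare testWelfare
    refine Finset.sum_congr rfl fun j _ => ?_
    have e1 : ∏ i' ∈ Reg σ j, q i' = ∏ i' ∈ T j, (if σ i' = some j then q i' else 1) := by
      simp only [hReg]; rw [Finset.prod_filter]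
    have e2 : ∑ i ∈ Reg σ j, u i = ∑ i ∈ T j, (if σ i = some j then u i else 0) := by
      simp only [hReg]; rw [Finset.sum_filter]
    rw [e1, e2, mul_comm, Finset.sum_mul]
    refine Finset.sum_congr rfl fun i hi => ?_
    have hsplitF : ∏ i', F j i i' (σ i')
        = F j i i (σ i) * ∏ i' ∈ Finset.univ.erase i, F j i i' (σ i') :=
      (Finset.mul_prod_erase _ _ (Finset.mem_univ i)).symm
    have hrest : ∏ i' ∈ Finset.univ.erase i, F j i i' (σ i')
        = ∏ i' ∈ (T j).erase i, (if σ i' = some j then q i' else 1) := by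
      have hsub : (T j).erase i ⊆ Finset.univ.erase i :=
        Finset.erase_subset_erase i (Finset.subset_univ (T j))
      have hout : ∀ x ∈ Finset.univ.erase i, x ∉ (T j).erase i → F j i x (σ x) = 1 := by
        intro x hxu hxn
        have hxi : x ≠ i := (Finset.mem_erase.mp hxu).1
        have hxT : x ∉ T j := fun hxT => hxn (Finset.mem_erase.mpr ⟨hxi, hxT⟩)
        simp only [hF, if_neg hxi, if_neg hxT]
      rw [← Finset.prod_subset hsub hout]
      refine Finset.prod_congr rfl fun x hx => ?_
      rw [Finset.mem_erase] at hx
      simp only [hF, if_neg hx.1, if_pos hx.2]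
    rw [hsplitF, hrest, ← Finset.mul_prod_erase (T j) _ hi]
    have hFi : F j i i (σ i) = if σ i = some j then u i * q i else 0 := by
      simp only [hF, if_pos rfl]
    rw [hFi]
    by_cases hc : σ i = some j
    · rw [if_pos hc, if_pos hc, if_pos hc]; ring
    · rw [if_neg hc, if_neg hc, if_neg hc]; ring
  have hGval : ∀ (j : Fin B), ∀ i ∈ T j, ∀ i',
      (∑ o, w i' o * F j i i' o) =
        if i' = i then p i j * (u i * q i)
        else if i' ∈ (T j).erase i then 1 - p i' j * (1 - q i') else 1 := by
    intro j i hi i'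
    by_cases h1 : i' = i
    · subst h1
      rw [if_pos rfl, Fintype.sum_option]
      simp only [hF, if_pos rfl]
      have hnone : w i' none * (if (none : Option (Fin B)) = some j then u i' * q i' else 0) = 0 := by
        simp
      rw [hnone, zero_add]
      have hterm : ∀ b : Fin B, w i' (some b) * (if (some b : Option (Fin B)) = some j
          then u i' * q i' else 0) = if b = j then p i' b * (u i' * q i') else 0 := by
        intro b
        by_cases hb : b = j
        · subst hb; rw [if_pos rfl, if_pos rfl, hwsome]
        · rw [if_neg (by simpa using hb), if_neg hb, mul_zero]
      rw [Finset.sum_congr rfl fun b _ => hterm b, Finset.sum_ite_eq' Finset.univ j,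
        if_pos (Finset.mem_univ j)]
    · rw [if_neg h1]
      by_cases h2 : i' ∈ (T j).erase i
      · rw [if_pos h2]
        have h2' : i' ∈ T j := Finset.mem_of_mem_erase h2
        simp only [hF, if_neg h1, if_pos h2']
        rw [Fintype.sum_option]
        have hnone : w i' none * (if (none : Option (Fin B)) = some j then q i' else 1)
            = 1 - ∑ b, p i' b := by simp [hw]
        have hterm : ∀ b : Fin B, w i' (some b) * (if (some b : Option (Fin B)) = some j
            then q i' else 1) = p i' b + (if b = j then p i' j * (q i' - 1) else 0) := by
          intro b
          by_cases hb : b = j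
          · subst hb; rw [if_pos rfl, if_pos rfl, hwsome]; ring
          · rw [if_neg (by simpa using hb), if_neg hb, hwsome]; ring
        rw [hnone, Finset.sum_congr rfl fun b _ => hterm b, Finset.sum_add_distrib,
          Finset.sum_ite_eq' Finset.univ j, if_pos (Finset.mem_univ j)]
        ring
      · rw [if_neg h2]
        have h2' : i' ∉ T j := fun hm => h2 (Finset.mem_erase.mpr ⟨h1, hm⟩)
        simp only [hF, if_neg h1, if_neg h2']
        rw [Finset.sum_congr rfl fun o (_ : o ∈ Finset.univ) => mul_one (w i' o), hwsum i']
  have hprodsplit : ∀ (j : Fin B), ∀ i ∈ T j,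
      (∏ i', ∑ o, w i' o * F j i i' o)
        = p i j * (u i * q i) * ∏ i' ∈ (T j).erase i, (1 - p i' j * (1 - q i')) := by
    intro j i hi
    rw [Finset.prod_congr rfl fun i' _ => hGval j i hi i']
    rw [← Finset.mul_prod_erase Finset.univ _ (Finset.mem_univ i), if_pos rfl]
    congr 1
    have hsub : (T j).erase i ⊆ Finset.univ.erase i :=
      Finset.erase_subset_erase i (Finset.subset_univ (T j))
    have hout : ∀ x ∈ Finset.univ.erase i, x ∉ (T j).erase i →
        (if x = i then p i j * (u i * q i)
          else if x ∈ (T j).erase i then 1 - p x j * (1 - q x) else 1) = 1 := by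
      intro x hxu hxn
      rw [if_neg (Finset.mem_erase.mp hxu).1, if_neg hxn]
    rw [← Finset.prod_subset hsub hout]
    refine Finset.prod_congr rfl fun x hx => ?_
    rw [if_neg (Finset.mem_erase.mp hx).1, if_pos hx]
  have hE : (∑ σ : Fin n → Option (Fin B), (∏ i', w i' (σ i')) * Phi σ)
      = ∑ j, ∑ i ∈ T j,
          p i j * (u i * q i) * ∏ i' ∈ (T j).erase i, (1 - p i' j * (1 - q i')) := by
    calc (∑ σ : Fin n → Option (Fin B), (∏ i', w i' (σ i')) * Phi σ)
        = ∑ σ : Fin n → Option (Fin B), ∑ j, ∑ i ∈ T j,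
            ∏ i', (w i' (σ i') * F j i i' (σ i')) := by
          refine Finset.sum_congr rfl fun σ _ => ?_
          rw [hPhiForm σ, Finset.mul_sum]
          refine Finset.sum_congr rfl fun j _ => ?_
          rw [Finset.mul_sum]
          refine Finset.sum_congr rfl fun i _ => ?_
          rw [← Finset.prod_mul_distrib]
      _ = ∑ j, ∑ i ∈ T j, ∑ σ : Fin n → Option (Fin B),
            ∏ i', (w i' (σ i') * F j i i' (σ i')) := by
          rw [Finset.sum_comm]
          exact Finset.sum_congr rfl fun j _ => Finset.sum_comm
      _ = ∑ j, ∑ i ∈ T j, ∏ i', (∑ o, w i' o * F j i i' o) := by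
          refine Finset.sum_congr rfl fun j _ => Finset.sum_congr rfl fun i _ => ?_
          exact sum_fn_prod (F := fun i' o => w i' o * F j i i' o)
      _ = ∑ j, ∑ i ∈ T j,
            p i j * (u i * q i) * ∏ i' ∈ (T j).erase i, (1 - p i' j * (1 - q i')) :=
          Finset.sum_congr rfl fun j _ => Finset.sum_congr rfl fun i hi => hprodsplit j i hi
  have hY : ∀ (j : Fin B), ∀ i ∈ T j,
      (1:ℝ)/2 ≤ ∏ i' ∈ (T j).erase i, (1 - p i' j * (1 - q i')) := by
    intro j i hi
    have hf0 : ∀ i' ∈ (T j).erase i, 0 ≤ p i' j * (1 - q i') := fun i' _ =>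
      mul_nonneg (hp0 i' j) (by linarith [(hq i').2])
    have hfb : ∀ i' ∈ T j, p i' j * (1 - q i') ≤ (1 - q i') * (∏ k ∈ (T j).erase i', q k) / 2 := by
      intro i' hi'
      have := mul_le_mul_of_nonneg_right (hplee j i' hi') (by linarith [(hq i').2] : (0:ℝ) ≤ 1 - q i')
      calc p i' j * (1 - q i') ≤ (∏ k ∈ (T j).erase i', q k) / 2 * (1 - q i') := this
        _ = (1 - q i') * (∏ k ∈ (T j).erase i', q k) / 2 := by ring
    have hf1 : ∀ i' ∈ (T j).erase i, p i' j * (1 - q i') ≤ 1 := by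
      intro i' hi'
      have h1 := hfb i' (Finset.mem_of_mem_erase hi')
      have h2 : (∏ k ∈ (T j).erase i', q k) ≤ 1 :=
        Finset.prod_le_one (fun k _ => (hq k).1) (fun k _ => (hq k).2)
      have h3 : (0:ℝ) ≤ ∏ k ∈ (T j).erase i', q k := Finset.prod_nonneg fun k _ => (hq k).1
      nlinarith [(hq i').1, (hq i').2]
    have hsum1 : ∑ i' ∈ (T j).erase i, p i' j * (1 - q i') ≤ 1/2 := by
      calc ∑ i' ∈ (T j).erase i, p i' j * (1 - q i')
          ≤ ∑ i' ∈ T j, p i' j * (1 - q i') :=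
            Finset.sum_le_sum_of_subset_of_nonneg (Finset.erase_subset i (T j))
              (fun i' hi' _ => mul_nonneg (hp0 i' j) (by linarith [(hq i').2]))
        _ ≤ ∑ i' ∈ T j, (1 - q i') * (∏ k ∈ (T j).erase i', q k) / 2 :=
            Finset.sum_le_sum hfb
        _ = (∑ i' ∈ T j, (1 - q i') * ∏ k ∈ (T j).erase i', q k) / 2 := by
            rw [Finset.sum_div]
        _ ≤ 1/2 := by linarith [sum_weight_le_one hq (T j)]
    have := one_sub_sum_le_prod ((T j).erase i) (fun i' => p i' j * (1 - q i')) hf0 hf1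
    linarith
  have hElb : welfare q u T / 4 ≤ ∑ σ : Fin n → Option (Fin B), (∏ i', w i' (σ i')) * Phi σ := by
    rw [hE]
    have hwelf : ∑ j, ∑ i ∈ T j, u i * pivotalProb q T i j = welfare q u T := by
      have hext : ∀ j, ∑ i ∈ T j, u i * pivotalProb q T i j
          = ∑ i, u i * pivotalProb q T i j := fun j =>
        Finset.sum_subset (Finset.subset_univ _) (fun i _ hi => by
          rw [pivotalProb_eq_zero_of_not_mem i j hi, mul_zero])
      rw [Finset.sum_congr rfl fun j _ => hext j, Finset.sum_comm]
      unfold welfare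
      refine Finset.sum_congr rfl fun i _ => ?_
      rw [← Finset.mul_sum, sum_pivotalProb]
    have hterm : ∀ (j : Fin B), ∀ i ∈ T j, u i * pivotalProb q T i j / 4
        ≤ p i j * (u i * q i) * ∏ i' ∈ (T j).erase i, (1 - p i' j * (1 - q i')) := by
      intro j i hi
      have he : p i j * (u i * q i) = u i * (pivotalProb q T i j / 2) := by
        rw [show p i j * (u i * q i) = u i * (q i * p i j) by ring, hqp i j]
      rw [he]
      have h0 : 0 ≤ u i * (pivotalProb q T i j / 2) :=
        mul_nonneg (hu i) (by linarith [pivotalProb_nonneg (T := T) hq i j])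
      calc u i * pivotalProb q T i j / 4
          = u i * (pivotalProb q T i j / 2) * (1/2) := by ring
        _ ≤ u i * (pivotalProb q T i j / 2)
            * ∏ i' ∈ (T j).erase i, (1 - p i' j * (1 - q i')) :=
            mul_le_mul_of_nonneg_left (hY j i hi) h0
    calc welfare q u T / 4 = ∑ j, ∑ i ∈ T j, u i * pivotalProb q T i j / 4 := by
          simp only [← Finset.sum_div]
          rw [hwelf]
      _ ≤ _ := Finset.sum_le_sum fun j _ => Finset.sum_le_sum fun i hi => hterm j i hi
  have hW1 : ∑ σ : Fin n → Option (Fin B), (∏ i', w i' (σ i')) = 1 := by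
    rw [sum_fn_prod]
    rw [Finset.prod_congr rfl fun i _ => hwsum i]
    simp
  obtain ⟨σm, -, hmax⟩ := Finset.exists_max_image Finset.univ Phi ⟨fun _ => none, Finset.mem_univ _⟩
  have hEmax : (∑ σ : Fin n → Option (Fin B), (∏ i', w i' (σ i')) * Phi σ) ≤ Phi σm := by
    calc (∑ σ : Fin n → Option (Fin B), (∏ i', w i' (σ i')) * Phi σ)
        ≤ ∑ σ : Fin n → Option (Fin B), (∏ i', w i' (σ i')) * Phi σm := by
          refine Finset.sum_le_sum fun σ _ => ?_
          exact mul_le_mul_of_nonneg_left (hmax σ (Finset.mem_univ σ))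
            (Finset.prod_nonneg fun i' _ => hw0 i' (σ i'))
      _ = Phi σm := by rw [← Finset.sum_mul, hW1, one_mul]
  have hno : noWelfare q u (Reg σm) ≤ welfare q u (Reg σm) := by
    have hdisj : ∀ (i : Fin n) (j k : Fin B), i ∈ Reg σm j → i ∈ Reg σm k → j = k := by
      intro i j k hj hk
      simp only [hReg, Finset.mem_filter] at hj hk
      rw [hj.2] at hk
      exact Option.some.inj hk.2
    unfold noWelfare testWelfare welfare
    have e1 : ∀ j : Fin B, (∏ k ∈ Reg σm j, q k) * ∑ i ∈ Reg σm j, u i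
        = ∑ i, (if i ∈ Reg σm j then u i * ∏ k ∈ Reg σm j, q k else 0) := by
      intro j
      rw [mul_comm, Finset.sum_mul, Finset.sum_ite_mem, Finset.univ_inter]
    rw [Finset.sum_congr rfl fun j _ => e1 j, Finset.sum_comm]
    refine Finset.sum_le_sum fun i _ => ?_
    by_cases hc : ∃ j, i ∈ Reg σm j
    · obtain ⟨j₀, hj₀⟩ := hc
      rw [Finset.sum_eq_single j₀ (fun j _ hne => by
          rw [if_neg (fun hj => hne (hdisj i j j₀ hj hj₀))])
        (fun h => absurd (Finset.mem_univ j₀) h), if_pos hj₀]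
      refine mul_le_mul_of_nonneg_left ?_ (hu i)
      rw [← sum_healthProb_cond hq (Reg σm j₀)]
      unfold inNegProb
      refine Finset.sum_le_sum fun ω _ => ?_
      split_ifs with h1 h2
      · exact le_refl _
      · exact absurd ⟨j₀, hj₀, h1⟩ h2
      · exact healthProb_nonneg hq ω
      · exact le_refl _
    · push_neg at hc
      rw [Finset.sum_eq_zero (fun j _ => if_neg (hc j))]
      exact mul_nonneg (hu i) (inNegProb_nonneg hq i)
  refine ⟨Reg σm, ?_, ?_, ?_⟩
  · intro j k hjk
    rw [Finset.disjoint_left]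
    intro a haj hak
    simp only [hReg, Finset.mem_filter] at haj hak
    rw [haj.2] at hak
    exact hjk (Option.some.inj hak.2)
  · intro j
    exact le_trans (Finset.card_filter_le _ _) (hsize j)
  · have h1 : welfare q u T / 4 ≤ Phi σm := le_trans hElb hEmax
    have h2 : Phi σm ≤ welfare q u (Reg σm) := by rw [hPhi]; exact hno
    linarith
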